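/- Let V be a 𝔤-module, 𝔤 = 𝔰𝔳(0), which is a free U(𝔥)-module of rank 1 with generator w. Then ρ(M_m)·w ≠ 0 for every m ∈ ℤ (equivalently, the polynomial a_m representing M_m·w is nonzero for every m). -/

import Mathlib

/-- Evaluation of a polynomial `u(x,y,z)` at three operators `A, B, C`, applied to a
vector `w`: `u(A,B,C)·w` (when `A,B,C` pairwise commute, this is the usual substitution). -/
noncomputable def evalP {V : Type*} [AddCommGroup V] [Module ℂ V]
    (A B C : Module.End ℂ V) (w : V) (u : MvPolynomial (Fin 3) ℂ) : V :=
  (AddMonoidAlgebra.coeff u).sum fun d c => c • ((A ^ d 0 * B ^ d 1 * C ^ d 2) w)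

/-- If the `𝔰𝔳(0)`-module `V` is a free `U(𝔥)`-module of rank 1 with generator `w`
(i.e. `p ↦ p(ρL₀,ρM₀,ρY₀)·w` is a bijection `ℂ[x,y,z] → V`), then `ρ(M_m)·w ≠ 0`
for every `m ∈ ℤ`. -/
theorem stmt13
    -- `𝔤 = 𝔰𝔳(0)`: a complex Lie algebra with basis `{L n, M n, Y n : n ∈ ℤ}` ...
    (g : Type*) [LieRing g] [LieAlgebra ℂ g] (L M Y : ℤ → g)
    (B : Module.Basis (Fin 3 × ℤ) ℂ g)
    (hB : ∀ n : ℤ, B (0, n) = L n ∧ B (1, n) = M n ∧ B (2, n) = Y n)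
    -- ... and the following brackets:
    (hLL : ∀ n m : ℤ, ⁅L n, L m⁆ = (((m : ℂ) - (n : ℂ))) • L (m + n))
    (hLY : ∀ n m : ℤ, ⁅L n, Y m⁆ = ((m : ℂ) - (n : ℂ) / 2) • Y (m + n))
    (hLM : ∀ n m : ℤ, ⁅L n, M m⁆ = (m : ℂ) • M (m + n))
    (hYY : ∀ n m : ℤ, ⁅Y n, Y m⁆ = (((m : ℂ) - (n : ℂ))) • M (m + n))
    (hYM : ∀ n m : ℤ, ⁅Y n, M m⁆ = 0)
    (hMM : ∀ n m : ℤ, ⁅M n, M m⁆ = 0)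
    -- a `𝔤`-module `V`:
    (V : Type*) [AddCommGroup V] [Module ℂ V] [LieRingModule g V] [LieModule ℂ g V]
    (w : V)
    (hfree : Function.Bijective (evalP (LieModule.toEnd ℂ g V (L 0))
      (LieModule.toEnd ℂ g V (M 0)) (LieModule.toEnd ℂ g V (Y 0)) w)) :
    ∀ m : ℤ, ⁅M m, w⁆ ≠ 0 := by
  set A := LieModule.toEnd ℂ g V (L 0) with hA
  set Bo := LieModule.toEnd ℂ g V (M 0) with hBo
  set Co := LieModule.toEnd ℂ g V (Y 0) with hCo
  -- M₀ · w ≠ 0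
  have hM0w : ⁅M 0, w⁆ ≠ 0 := by
    have h1 : evalP A Bo Co w (MvPolynomial.X 1) = ⁅M 0, w⁆ := by
      rw [evalP, show AddMonoidAlgebra.coeff (MvPolynomial.X 1 : MvPolynomial (Fin 3) ℂ) =
          Finsupp.single (Finsupp.single 1 1) 1 from rfl, Finsupp.sum_single_index (by simp)]
      simp [Finsupp.single_apply, hBo, LieModule.toEnd_apply_apply]
    have h0 : evalP A Bo Co w 0 = 0 := by simp [evalP]
    intro h
    have hinj := hfree.injective (h1.trans (h.trans h0.symm))
    exact MvPolynomial.X_ne_zero 1 hinj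
  intro m hzero
  rcases eq_or_ne m 0 with rfl | hm
  · exact hM0w hzero
  -- M m kills A, Bo, Co stable vectors
  have sA : ∀ v : V, ⁅M m, v⁆ = 0 → ⁅M m, A v⁆ = 0 := by
    intro v hv
    have : A v = ⁅L 0, v⁆ := rfl
    rw [this, leibniz_lie, hv, lie_zero, add_zero, ← lie_skew, hLM 0 m]
    simp [hv]
  have sB : ∀ v : V, ⁅M m, v⁆ = 0 → ⁅M m, Bo v⁆ = 0 := by
    intro v hv
    have : Bo v = ⁅M 0, v⁆ := rfl
    rw [this, leibniz_lie, hv, lie_zero, add_zero, hMM m 0, zero_lie]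
  have sC : ∀ v : V, ⁅M m, v⁆ = 0 → ⁅M m, Co v⁆ = 0 := by
    intro v hv
    have : Co v = ⁅Y 0, v⁆ := rfl
    rw [this, leibniz_lie, hv, lie_zero, add_zero, ← lie_skew, hYM 0 m]
    simp
  have pA : ∀ (a : ℕ) (v : V), ⁅M m, v⁆ = 0 → ⁅M m, (A ^ a) v⁆ = 0 := by
    intro a
    induction a with
    | zero => intro v hv; simpa using hv
    | succ n ih =>
      intro v hv
      rw [pow_succ, Module.End.mul_apply]
      exact ih _ (sA _ hv)
  have pB : ∀ (a : ℕ) (v : V), ⁅M m, v⁆ = 0 → ⁅M m, (Bo ^ a) v⁆ = 0 := by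
    intro a
    induction a with
    | zero => intro v hv; simpa using hv
    | succ n ih =>
      intro v hv
      rw [pow_succ, Module.End.mul_apply]
      exact ih _ (sB _ hv)
  have pC : ∀ (a : ℕ) (v : V), ⁅M m, v⁆ = 0 → ⁅M m, (Co ^ a) v⁆ = 0 := by
    intro a
    induction a with
    | zero => intro v hv; simpa using hv
    | succ n ih =>
      intro v hv
      rw [pow_succ, Module.End.mul_apply]
      exact ih _ (sC _ hv)
  -- M m annihilates all of V
  have all : ∀ v : V, ⁅M m, v⁆ = 0 := by
    intro v
    obtain ⟨u, rfl⟩ := hfree.surjective v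
    rw [evalP]
    rw [show ⁅M m, (AddMonoidAlgebra.coeff u).sum fun d c => c • ((A ^ d 0 * Bo ^ d 1 * Co ^ d 2) w)⁆ =
        (LieModule.toEnd ℂ g V (M m)) ((AddMonoidAlgebra.coeff u).sum fun d c =>
          c • ((A ^ d 0 * Bo ^ d 1 * Co ^ d 2) w)) from rfl]
    rw [map_finsuppSum]
    rw [Finsupp.sum]; apply Finset.sum_eq_zero
    intro d _
    rw [map_smul]
    have : ⁅M m, (A ^ d 0 * Bo ^ d 1 * Co ^ d 2) w⁆ = 0 := by
      rw [Module.End.mul_apply, Module.End.mul_apply]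
      exact pA _ _ (pB _ _ (pC _ _ hzero))
    rw [show (LieModule.toEnd ℂ g V (M m)) ((A ^ d 0 * Bo ^ d 1 * Co ^ d 2) w)
        = ⁅M m, (A ^ d 0 * Bo ^ d 1 * Co ^ d 2) w⁆ from rfl, this, smul_zero]
  -- contradiction with M₀ · w ≠ 0
  have hkey : (m : ℂ) • ⁅M 0, w⁆ = 0 := by
    have hb : ⁅L (-m), M m⁆ = (m : ℂ) • M 0 := by
      have := hLM (-m) m
      simpa using this
    calc (m : ℂ) • ⁅M 0, w⁆ = ⁅((m : ℂ) • M 0 : g), w⁆ := (smul_lie _ _ _).symm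
      _ = ⁅⁅L (-m), M m⁆, w⁆ := by rw [hb]
      _ = ⁅L (-m), ⁅M m, w⁆⁆ - ⁅M m, ⁅L (-m), w⁆⁆ := lie_lie _ _ _
      _ = 0 := by rw [hzero, lie_zero, all, sub_zero]
  have : ⁅M 0, w⁆ = 0 := by
    rcases smul_eq_zero.mp hkey with h | h
    · exact absurd (by simpa using h) hm
    · exact h
  exact hM0w this
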